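/- With the setup of the discrete closed-form formula for β_n(P,Q): if M = max_{y : Q(y)≠0} P(y)/Q(y) is finite, then β_n(P,Q) ≤ f(∞) + M/n, where f(∞) = ∑_{y : Q(y)=0} P(y). -/

import Mathlib

open scoped Classical BigOperators

/-- Success probability of adversary `A` in the shuffle re-identification game:
each user `i` samples `y i` from distribution `Pvec i`, a uniformly random
permutation `σ` is applied, the adversary sees the shuffled vector and wins if
it outputs `σ⁻¹ 0` (the shuffled position of user 0, the target). -/
noncomputable def shuffleSuccess {Y : Type*} [Fintype Y] (n : ℕ) [NeZero n]
    (Pvec : Fin n → Y → ℝ) (A : (Fin n → Y) → Fin n) : ℝ :=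
  (Nat.factorial n : ℝ)⁻¹ *
    ∑ σ : Equiv.Perm (Fin n), ∑ y : Fin n → Y,
      (∏ i, Pvec i (y i)) * (if A (fun i => y (σ i)) = σ.symm 0 then 1 else 0)

/-- Bayes-optimal success probability `β_n(P,Q)`: user 0 samples from `P`,
the other `n - 1` users sample i.i.d. from `Q`, and we take the supremum over
all adversaries. -/
noncomputable def betaN {Y : Type*} [Fintype Y] (P Q : Y → ℝ) (n : ℕ) [NeZero n] : ℝ :=
  ⨆ A : (Fin n → Y) → Fin n,
    shuffleSuccess n (fun i => if i = 0 then P else Q) A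

open Finset

lemma count_perm (m : ℕ) (k : Fin (m+1)) :
    (∑ σ : Equiv.Perm (Fin (m+1)), (if σ.symm 0 = k then (1:ℝ) else 0))
      = m.factorial := by
  classical
  have h0 : (∑ σ : Equiv.Perm (Fin (m+1)), (if σ.symm 0 = k then (1:ℝ) else 0))
      = ∑ σ : Equiv.Perm (Fin (m+1)), (if σ k = 0 then (1:ℝ) else 0) := by
    refine Finset.sum_congr rfl fun σ _ => ?_
    have : (σ.symm 0 = k) ↔ (σ k = 0) := by
      rw [Equiv.symm_apply_eq, eq_comm]
    simp [this]
  rw [h0]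
  have h1 : (∑ σ : Equiv.Perm (Fin (m+1)), (if σ k = 0 then (1:ℝ) else 0))
      = ∑ σ : Equiv.Perm (Fin (m+1)), (if σ 0 = 0 then (1:ℝ) else 0) := by
    rw [← Equiv.sum_comp (Equiv.mulRight (Equiv.swap (0:Fin (m+1)) k))
      (fun σ => if σ k = 0 then (1:ℝ) else 0)]
    refine Finset.sum_congr rfl fun σ _ => ?_
    have : (Equiv.mulRight (Equiv.swap (0:Fin (m+1)) k) σ) k = σ 0 := by
      simp [Equiv.Perm.mul_apply, Equiv.swap_apply_right]
    simp [this]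
  rw [h1, ← Equiv.sum_comp (Equiv.Perm.decomposeFin.symm)
    (fun σ => if σ 0 = 0 then (1:ℝ) else 0), Fintype.sum_prod_type]
  simp [Equiv.Perm.decomposeFin_symm_apply_zero, Finset.sum_ite_eq,
    Finset.sum_const, Fintype.card_perm, Fintype.card_fin]

theorem stmt7 {Y : Type*} [Fintype Y] (P Q : Y → ℝ)
    (hP0 : ∀ y, 0 ≤ P y) (hQ0 : ∀ y, 0 ≤ Q y)
    (hP1 : ∑ y, P y = 1) (hQ1 : ∑ y, Q y = 1)
    (hne : (Finset.univ.filter (fun y => Q y ≠ 0)).Nonempty)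
    (n : ℕ) [NeZero n] :
    betaN P Q n ≤
      (∑ y ∈ Finset.univ.filter (fun y => Q y = 0), P y) +
      ((Finset.univ.filter (fun y => Q y ≠ 0)).sup' hne (fun y => P y / Q y)) / n := by
  classical
  obtain ⟨m, rfl⟩ := Nat.exists_eq_succ_of_ne_zero (NeZero.ne n)
  set M := ((Finset.univ.filter (fun y => Q y ≠ 0)).sup' hne (fun y => P y / Q y)) with hMdef
  set F := (∑ y ∈ Finset.univ.filter (fun y => Q y = 0), P y) with hFdef
  have hM0 : 0 ≤ M := by
    obtain ⟨y0, hy0⟩ := hne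
    have : P y0 / Q y0 ≤ M := Finset.le_sup' (fun y => P y / Q y) hy0
    exact le_trans (div_nonneg (hP0 y0) (hQ0 y0)) this
  have hQsum : (∑ z : Fin (m+1) → Y, ∏ i, Q (z i)) = 1 := by
    rw [← Fintype.piFinset_univ, ← Finset.prod_univ_sum (fun _ => Finset.univ)
      (fun (_ : Fin (m+1)) (x : Y) => Q x)]
    simp [hQ1]
  refine ciSup_le fun A => ?_
  rw [shuffleSuccess]
  -- termwise bound
  have hterm : ∀ (σ : Equiv.Perm (Fin (m+1))) (y : Fin (m+1) → Y),
      (∏ i, (if i = 0 then P else Q) (y i)) *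
        (if A (fun i => y (σ i)) = σ.symm 0 then (1:ℝ) else 0) ≤
      (M * ∏ i, Q (y i)) * (if A (fun i => y (σ i)) = σ.symm 0 then (1:ℝ) else 0)
        + (if Q (y 0) = 0 then P (y 0) else 0) * ∏ i ∈ univ.erase 0, Q (y i) := by
    intro σ y
    set d : ℝ := (if A (fun i => y (σ i)) = σ.symm 0 then (1:ℝ) else 0) with hd
    have hd0 : 0 ≤ d := by rw [hd]; positivity
    have hd1 : d ≤ 1 := by rw [hd]; split <;> norm_num
    set E : ℝ := ∏ i ∈ univ.erase 0, Q (y i) with hE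
    have hE0 : 0 ≤ E := Finset.prod_nonneg fun i _ => hQ0 _
    have hprod : (∏ i, (if i = 0 then P else Q) (y i)) = P (y 0) * E := by
      rw [hE, ← Finset.mul_prod_erase univ (fun i => (if i = 0 then P else Q) (y i))
        (mem_univ 0)]
      have h1 : (if (0 : Fin (m+1)) = 0 then P else Q) (y 0) = P (y 0) := by simp
      have h2 : ∀ i ∈ univ.erase (0 : Fin (m+1)),
          (if i = 0 then P else Q) (y i) = Q (y i) := fun i hi => by
        simp [(Finset.mem_erase.1 hi).1]
      rw [h1, Finset.prod_congr rfl h2]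
    have hQE : Q (y 0) * E = ∏ i, Q (y i) := by
      rw [hE, Finset.mul_prod_erase univ (fun i => Q (y i)) (mem_univ 0)]
    set c : ℝ := (if Q (y 0) = 0 then P (y 0) else 0) with hc
    have hc0 : 0 ≤ c := by
      rw [hc]; split
      · exact hP0 _
      · exact le_refl 0
    have hPy : P (y 0) ≤ M * Q (y 0) + c := by
      rw [hc]
      by_cases h : Q (y 0) = 0
      · simp [h]
      · have hQpos : 0 < Q (y 0) := lt_of_le_of_ne (hQ0 _) (Ne.symm h)
        have hle : P (y 0) / Q (y 0) ≤ M :=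
          Finset.le_sup' (fun y => P y / Q y) (Finset.mem_filter.2 ⟨mem_univ _, h⟩)
        rw [div_le_iff₀ hQpos] at hle
        simp only [h, if_false]
        linarith
    rw [hprod, ← hQE]
    nlinarith [mul_le_mul_of_nonneg_right (mul_le_mul_of_nonneg_right hPy hE0) hd0,
      mul_le_mul_of_nonneg_left hd1 (mul_nonneg hc0 hE0)]
  -- bound the double sum
  have hsum : (∑ σ : Equiv.Perm (Fin (m+1)), ∑ y : Fin (m+1) → Y,
      (∏ i, (if i = 0 then P else Q) (y i)) *
        (if A (fun i => y (σ i)) = σ.symm 0 then (1:ℝ) else 0))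
      ≤ M * m.factorial + ((m+1).factorial : ℝ) * F := by
    have step1 : (∑ σ : Equiv.Perm (Fin (m+1)), ∑ y : Fin (m+1) → Y,
        (∏ i, (if i = 0 then P else Q) (y i)) *
          (if A (fun i => y (σ i)) = σ.symm 0 then (1:ℝ) else 0))
        ≤ (∑ σ : Equiv.Perm (Fin (m+1)), ∑ y : Fin (m+1) → Y,
          (M * ∏ i, Q (y i)) * (if A (fun i => y (σ i)) = σ.symm 0 then (1:ℝ) else 0))
        + (∑ σ : Equiv.Perm (Fin (m+1)), ∑ y : Fin (m+1) → Y,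
          (if Q (y 0) = 0 then P (y 0) else 0) * ∏ i ∈ univ.erase 0, Q (y i)) := by
      rw [← Finset.sum_add_distrib]
      refine Finset.sum_le_sum fun σ _ => ?_
      rw [← Finset.sum_add_distrib]
      exact Finset.sum_le_sum fun y _ => hterm σ y
    have part1 : (∑ σ : Equiv.Perm (Fin (m+1)), ∑ y : Fin (m+1) → Y,
        (M * ∏ i, Q (y i)) * (if A (fun i => y (σ i)) = σ.symm 0 then (1:ℝ) else 0))
        = M * m.factorial := by
      have hre : ∀ σ : Equiv.Perm (Fin (m+1)),
          (∑ y : Fin (m+1) → Y,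
            (M * ∏ i, Q (y i)) * (if A (fun i => y (σ i)) = σ.symm 0 then (1:ℝ) else 0))
          = ∑ z : Fin (m+1) → Y,
            (M * ∏ i, Q (z i)) * (if A z = σ.symm 0 then (1:ℝ) else 0) := by
        intro σ
        rw [← Equiv.sum_comp (Equiv.arrowCongr σ (Equiv.refl Y))
          (fun y => (M * ∏ i, Q (y i)) *
            (if A (fun i => y (σ i)) = σ.symm 0 then (1:ℝ) else 0))]
        refine Finset.sum_congr rfl fun z _ => ?_
        have h1 : (fun i => (Equiv.arrowCongr σ (Equiv.refl Y) z) (σ i)) = z := by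
          funext i; simp [Equiv.arrowCongr_apply]
        have h2 : (∏ i, Q ((Equiv.arrowCongr σ (Equiv.refl Y) z) i)) = ∏ i, Q (z i) := by
          simp only [Equiv.arrowCongr_apply, Function.comp, Equiv.refl_apply]
          exact Equiv.prod_comp σ.symm (fun j => Q (z j))
        simp only [h1, h2]
      calc (∑ σ : Equiv.Perm (Fin (m+1)), ∑ y : Fin (m+1) → Y,
            (M * ∏ i, Q (y i)) * (if A (fun i => y (σ i)) = σ.symm 0 then (1:ℝ) else 0))
          = ∑ σ : Equiv.Perm (Fin (m+1)), ∑ z : Fin (m+1) → Y,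
            (M * ∏ i, Q (z i)) * (if A z = σ.symm 0 then (1:ℝ) else 0) :=
            Finset.sum_congr rfl fun σ _ => hre σ
        _ = ∑ z : Fin (m+1) → Y, ∑ σ : Equiv.Perm (Fin (m+1)),
            (M * ∏ i, Q (z i)) * (if A z = σ.symm 0 then (1:ℝ) else 0) := Finset.sum_comm
        _ = ∑ z : Fin (m+1) → Y, (M * ∏ i, Q (z i)) * (m.factorial : ℝ) := by
            refine Finset.sum_congr rfl fun z _ => ?_
            rw [← Finset.mul_sum]
            congr 1
            rw [← count_perm m (A z)]
            exact Finset.sum_congr rfl fun σ _ => by simp [eq_comm]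
        _ = M * m.factorial := by
            rw [← Finset.sum_mul, ← Finset.mul_sum, hQsum]
            ring
    have part2 : (∑ σ : Equiv.Perm (Fin (m+1)), ∑ y : Fin (m+1) → Y,
        (if Q (y 0) = 0 then P (y 0) else 0) * ∏ i ∈ univ.erase 0, Q (y i))
        = ((m+1).factorial : ℝ) * F := by
      rw [Finset.sum_const]
      have hcard : (Finset.univ : Finset (Equiv.Perm (Fin (m+1)))).card = (m+1).factorial := by
        simp [Fintype.card_perm]
      rw [hcard]
      have hinner : (∑ y : Fin (m+1) → Y,
          (if Q (y 0) = 0 then P (y 0) else 0) * ∏ i ∈ univ.erase 0, Q (y i)) = F := by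
        set g : Fin (m+1) → Y → ℝ :=
          fun i x => if i = 0 then (if Q x = 0 then P x else 0) else Q x with hg
        have hGy : ∀ y : Fin (m+1) → Y,
            (if Q (y 0) = 0 then P (y 0) else 0) * ∏ i ∈ univ.erase 0, Q (y i)
            = ∏ i, g i (y i) := by
          intro y
          rw [← Finset.mul_prod_erase univ (fun i => g i (y i)) (mem_univ 0)]
          have h1 : g 0 (y 0) = (if Q (y 0) = 0 then P (y 0) else 0) := by simp [hg]
          have h2 : ∀ i ∈ univ.erase (0 : Fin (m+1)), g i (y i) = Q (y i) := fun i hi => by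
            simp [hg, (Finset.mem_erase.1 hi).1]
          rw [h1, Finset.prod_congr rfl h2]
        simp only [hGy]
        rw [← Fintype.piFinset_univ, ← Finset.prod_univ_sum (fun _ => Finset.univ) g]
        rw [← Finset.mul_prod_erase univ (fun i => ∑ x, g i x) (mem_univ 0)]
        have h0 : (∑ x, g 0 x) = F := by
          rw [hFdef]
          simp only [hg, if_pos rfl]
          rw [Finset.sum_filter]
        have hrest : (∏ i ∈ univ.erase 0, ∑ x, g i x) = 1 := by
          refine Finset.prod_eq_one fun i hi => ?_
          simp only [hg, (Finset.mem_erase.1 hi).1, if_false]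
          exact hQ1
        rw [h0, hrest, mul_one]
      rw [hinner]
      simp [mul_comm]
    calc _ ≤ _ := step1
      _ = M * m.factorial + ((m+1).factorial : ℝ) * F := by rw [part1, part2]
  -- conclude
  have hfacpos : (0:ℝ) < ((m+1).factorial : ℝ) := by positivity
  have hkey := mul_le_mul_of_nonneg_left hsum (le_of_lt (inv_pos.2 hfacpos))
  refine le_trans hkey ?_
  have hfac : ((m+1).factorial : ℝ) = ((m:ℝ) + 1) * (m.factorial : ℝ) := by
    push_cast [Nat.factorial_succ]; ring
  have hmf : (0:ℝ) < (m.factorial : ℝ) := by positivity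
  have hm1 : (0:ℝ) < (m:ℝ) + 1 := by positivity
  have hcast : ((m.succ : ℕ) : ℝ) = (m:ℝ) + 1 := by push_cast; ring
  have : ((m+1).factorial : ℝ)⁻¹ * (M * m.factorial + ((m+1).factorial : ℝ) * F)
      = F + M / ((m:ℝ) + 1) := by
    rw [hfac]
    field_simp
    ring
  rw [this, hcast]
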